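/- For every δ ∈ (0,1) there exists a constant C = C(δ) > 0 such that for every integer n ≥ 1, (1/A_n^δ) · ∫_{Γ₂} | Σ_{k=0}^{n} A_{n−k}^{δ−1} · D*_k(u1,u2) | du1 du2 ≤ C · log(n+1), where Γ₂ = {(u1,u2) ∈ Γ : u1 ≥ 1/(n+1), u2 ≤ 1/(3(n+1))}. -/

import Mathlib

open MeasureTheory Finset

/-- The triangle `Γ = {(u₁,u₂) : 0 ≤ u₂ ≤ u₁/3, 0 ≤ u₁ ≤ 1}`. -/
def GammaT : Set (ℝ × ℝ) := {u | 0 ≤ u.2 ∧ u.2 ≤ u.1 / 3 ∧ 0 ≤ u.1 ∧ u.1 ≤ 1}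

open Finset in
/-- Cesàro numbers: `A_n^δ = (δ+1)(δ+2)⋯(δ+n)/n!`, with `A_0^δ = 1`. -/
noncomputable def cesaroA (δ : ℝ) (n : ℕ) : ℝ :=
  (∏ i ∈ Finset.range n, (δ + i + 1)) / n.factorial

/-- The transformed hexagonal Dirichlet kernel `D*_k`. -/
noncomputable def DstarK (k : ℕ) (u : ℝ × ℝ) : ℝ :=
  (Real.sin (((k : ℝ) + 1) * Real.pi * u.2) *
      Real.sin (((k : ℝ) + 1) * Real.pi * (u.1 + u.2) / 2) *
      Real.sin (((k : ℝ) + 1) * Real.pi * (u.1 - u.2) / 2) -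
    Real.sin ((k : ℝ) * Real.pi * u.2) *
      Real.sin ((k : ℝ) * Real.pi * (u.1 + u.2) / 2) *
      Real.sin ((k : ℝ) * Real.pi * (u.1 - u.2) / 2)) /
    (Real.sin (Real.pi * u.2) * Real.sin (Real.pi * (u.1 + u.2) / 2) *
      Real.sin (Real.pi * (u.1 - u.2) / 2))


lemma cesaroA_nonneg {β : ℝ} (hβ : -1 ≤ β) (n : ℕ) : 0 ≤ cesaroA β n := by
  unfold cesaroA
  apply div_nonneg _ (by positivity)
  exact Finset.prod_nonneg fun i _ => by have : (0:ℝ) ≤ i := Nat.cast_nonneg i; linarith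

lemma cesaroA_one_le {δ : ℝ} (hδ : 0 ≤ δ) (n : ℕ) : 1 ≤ cesaroA δ n := by
  unfold cesaroA
  rw [le_div_iff₀ (by positivity), one_mul]
  calc (n.factorial : ℝ) = ∏ i ∈ Finset.range n, ((i : ℝ) + 1) := by
        induction n with
        | zero => simp
        | succ m ih => rw [Finset.prod_range_succ, ← ih, Nat.factorial_succ]; push_cast; ring
    _ ≤ ∏ i ∈ Finset.range n, (δ + i + 1) := by
        apply Finset.prod_le_prod (fun i _ => by positivity) (fun i _ => by linarith)

lemma cesaroA_succ (δ : ℝ) (n : ℕ) :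
    cesaroA δ (n+1) = cesaroA δ n + cesaroA (δ-1) (n+1) := by
  unfold cesaroA
  have h1 : ∏ i ∈ Finset.range (n+1), (δ - 1 + i + 1) = δ * ∏ i ∈ Finset.range n, (δ + i + 1) := by
    rw [Finset.prod_range_succ']
    have h2 : (∏ i ∈ Finset.range n, (δ - 1 + ↑(i+1) + 1)) = ∏ i ∈ Finset.range n, (δ + i + 1) :=
      Finset.prod_congr rfl fun i _ => by push_cast; ring
    rw [h2]
    norm_num
    ring
  rw [Finset.prod_range_succ, h1, Nat.factorial_succ]
  have hf : (n.factorial : ℝ) ≠ 0 := by positivity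
  have hf2 : ((n+1 : ℕ) : ℝ) ≠ 0 := by positivity
  field_simp
  push_cast
  ring

lemma cesaroA_sum (δ : ℝ) (n : ℕ) :
    ∑ m ∈ Finset.range (n+1), cesaroA (δ-1) m = cesaroA δ n := by
  induction n with
  | zero => simp [cesaroA]
  | succ m ih => rw [cesaroA_succ δ m, Finset.sum_range_succ, ih]

lemma abs_sub'' (p q : ℝ) : |p - q| ≤ |p| + |q| := by
  calc |p - q| = |p + (-q)| := by ring_nf
    _ ≤ |p| + |(-q)| := abs_add_le _ _
    _ = |p| + |q| := by rw [abs_neg]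

lemma sin_lip (x y : ℝ) : |Real.sin x - Real.sin y| ≤ |x - y| := by
  rw [Real.sin_sub_sin]
  calc |2 * Real.sin ((x - y)/2) * Real.cos ((x + y)/2)|
      = 2 * |Real.sin ((x-y)/2)| * |Real.cos ((x+y)/2)| := by
        rw [abs_mul, abs_mul]; norm_num
    _ ≤ 2 * |(x-y)/2| * 1 := by
        apply mul_le_mul (by
          have := Real.abs_sin_le_abs (x := (x-y)/2)
          nlinarith [abs_nonneg ((x-y)/2)]) (Real.abs_cos_le_one _) (abs_nonneg _) (by positivity)
    _ = |x - y| := by rw [abs_div]; norm_num; ring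

lemma cos_lip (x y : ℝ) : |Real.cos x - Real.cos y| ≤ |x - y| := by
  rw [Real.cos_sub_cos]
  calc |-2 * Real.sin ((x + y)/2) * Real.sin ((x - y)/2)|
      = 2 * |Real.sin ((x+y)/2)| * |Real.sin ((x-y)/2)| := by
        rw [abs_mul, abs_mul]; norm_num
    _ ≤ 2 * 1 * |(x-y)/2| := by
        apply mul_le_mul (by
          have := Real.abs_sin_le_one ((x+y)/2); nlinarith)
          (Real.abs_sin_le_abs) (abs_nonneg _) (by positivity)
    _ = |x - y| := by rw [abs_div]; norm_num; ring

noncomputable def Sfun (t s : ℝ) (j : ℕ) : ℝ :=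
  Real.sin (j*Real.pi*s) * Real.sin (j*Real.pi*(t+s)/2) * Real.sin (j*Real.pi*(t-s)/2)

lemma Sfun_eq (t s : ℝ) (j : ℕ) :
    Sfun t s j = Real.sin (j*Real.pi*s) * (Real.cos (j*Real.pi*s) - Real.cos (j*Real.pi*t)) / 2 := by
  have h := Real.cos_sub_cos ((j:ℝ)*Real.pi*s) ((j:ℝ)*Real.pi*t)
  have e1 : ((j:ℝ)*Real.pi*s + (j:ℝ)*Real.pi*t)/2 = (j:ℝ)*Real.pi*(s+t)/2 := by ring
  have e2 : ((j:ℝ)*Real.pi*s - (j:ℝ)*Real.pi*t)/2 = -((j:ℝ)*Real.pi*(t-s)/2) := by ring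
  rw [e1, e2, Real.sin_neg] at h
  have e3 : (j:ℝ)*Real.pi*(s+t)/2 = (j:ℝ)*Real.pi*(t+s)/2 := by ring
  rw [e3] at h
  unfold Sfun
  linear_combination (-(Real.sin ((j:ℝ)*Real.pi*s))/2) * h

lemma Sfun_diff (t s : ℝ) (hs : 0 ≤ s) (ht : 0 ≤ t) (j : ℕ) :
    |Sfun t s (j+1) - Sfun t s j| ≤
      Real.pi*s + (j:ℝ)*(Real.pi*s)*(Real.pi*s + Real.pi*t)/2 := by
  set a := Real.pi*s with ha
  set b := Real.pi*t with hb
  have ha0 : 0 ≤ a := by positivity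
  have hb0 : 0 ≤ b := by positivity
  set x := (j:ℝ) with hx
  have hx0 : 0 ≤ x := Nat.cast_nonneg j
  have key : Sfun t s (j+1) - Sfun t s j =
      ((Real.sin ((x+1)*a) - Real.sin (x*a)) * (Real.cos ((x+1)*a) - Real.cos ((x+1)*b))
        + Real.sin (x*a) * ((Real.cos ((x+1)*a) - Real.cos (x*a)) - (Real.cos ((x+1)*b) - Real.cos (x*b)))) / 2 := by
    rw [Sfun_eq, Sfun_eq]
    push_cast
    simp only [hx, ha, hb]
    ring_nf
  have h1 : |Real.sin ((x+1)*a) - Real.sin (x*a)| ≤ a := by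
    have := sin_lip ((x+1)*a) (x*a)
    have e : |(x+1)*a - x*a| = a := by rw [show (x+1)*a - x*a = a by ring, abs_of_nonneg ha0]
    linarith [e ▸ this]
  have h2 : |Real.cos ((x+1)*a) - Real.cos ((x+1)*b)| ≤ 2 := by
    have := abs_sub'' (Real.cos ((x+1)*a)) (Real.cos ((x+1)*b))
    have c1 := Real.abs_cos_le_one ((x+1)*a)
    have c2 := Real.abs_cos_le_one ((x+1)*b)
    linarith
  have h3 : |Real.sin (x*a)| ≤ x*a :=
    le_trans Real.abs_sin_le_abs (le_of_eq (abs_of_nonneg (mul_nonneg hx0 ha0)))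
  have h4 : |Real.cos ((x+1)*a) - Real.cos (x*a)| ≤ a := by
    have := cos_lip ((x+1)*a) (x*a)
    rwa [show (x+1)*a - x*a = a by ring, abs_of_nonneg ha0] at this
  have h5 : |Real.cos ((x+1)*b) - Real.cos (x*b)| ≤ b := by
    have := cos_lip ((x+1)*b) (x*b)
    rwa [show (x+1)*b - x*b = b by ring, abs_of_nonneg hb0] at this
  have h6 : |(Real.cos ((x+1)*a) - Real.cos (x*a)) - (Real.cos ((x+1)*b) - Real.cos (x*b))| ≤ a + b := by
    have := abs_sub'' (Real.cos ((x+1)*a) - Real.cos (x*a)) (Real.cos ((x+1)*b) - Real.cos (x*b))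
    linarith
  rw [key]
  rw [abs_div]
  have h7 : |(Real.sin ((x+1)*a) - Real.sin (x*a)) * (Real.cos ((x+1)*a) - Real.cos ((x+1)*b))
        + Real.sin (x*a) * ((Real.cos ((x+1)*a) - Real.cos (x*a)) - (Real.cos ((x+1)*b) - Real.cos (x*b)))|
      ≤ a * 2 + (x*a) * (a+b) := by
    refine (abs_add_le _ _).trans ?_
    gcongr ?_ + ?_
    · rw [abs_mul]
      exact mul_le_mul h1 h2 (abs_nonneg _) ha0
    · rw [abs_mul]
      exact mul_le_mul h3 h6 (abs_nonneg _) (by positivity)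
  rw [show |(2:ℝ)| = 2 by norm_num]
  rw [div_le_iff₀ (by norm_num : (0:ℝ) < 2)]
  nlinarith [h7]

set_option maxHeartbeats 1000000 in
lemma key_bound (δ : ℝ) (hδ0 : 0 < δ) (n : ℕ) (t s : ℝ)
    (hs0 : 0 ≤ s) (hst : s ≤ t/3) (ht1 : t ≤ 1) (htn : 1/((n:ℝ)+1) ≤ t) :
    |∑ k ∈ Finset.range (n+1), cesaroA (δ-1) (n-k) * DstarK k (t, s)|
      ≤ 17 * cesaroA δ n * ((n:ℝ)+1) / t := by
  have hnpos : (0:ℝ) < (n:ℝ)+1 := by positivity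
  have ht0 : 0 < t := lt_of_lt_of_le (by positivity) htn
  have hts : s ≤ t := le_trans hst (by linarith)
  have hA0 : (0:ℝ) ≤ cesaroA δ n := le_trans zero_le_one (cesaroA_one_le hδ0.le n)
  have hAm : ∀ m, 0 ≤ cesaroA (δ-1) m := fun m => cesaroA_nonneg (by linarith) m
  have hnt : 1 ≤ ((n:ℝ)+1) * t := by
    rw [div_le_iff₀ hnpos] at htn; linarith
  have hRHS0 : 0 ≤ 17 * cesaroA δ n * ((n:ℝ)+1) / t := by
    apply div_nonneg _ ht0.le
    positivity
  set D := Real.sin (Real.pi*s) * Real.sin (Real.pi*(t+s)/2) * Real.sin (Real.pi*(t-s)/2) with hD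
  have hDk : ∀ k : ℕ, DstarK k (t, s) = (Sfun t s (k+1) - Sfun t s k) / D := by
    intro k
    rw [hD]
    unfold DstarK Sfun
    push_cast
    ring_nf
  rcases eq_or_lt_of_le hs0 with hse | hs
  · have hD0 : D = 0 := by rw [hD, ← hse]; simp
    have hz : ∀ k : ℕ, DstarK k (t, s) = 0 := fun k => by rw [hDk k, hD0, div_zero]
    simp only [hz, mul_zero, Finset.sum_const_zero, abs_zero]
    exact hRHS0
  · have hs3 : s ≤ 1/3 := by linarith
    have hπ := Real.pi_pos
    have hπ2 : Real.pi ≤ 3.15 := Real.pi_lt_d2.le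
    have hsin1 : 2*s ≤ Real.sin (Real.pi*s) := by
      have h := Real.mul_le_sin (x := Real.pi*s) (by positivity) (by nlinarith)
      calc 2*s = 2/Real.pi * (Real.pi*s) := by field_simp
        _ ≤ _ := h
    have hsin3 : t - s ≤ Real.sin (Real.pi*(t-s)/2) := by
      have h := Real.mul_le_sin (x := Real.pi*(t-s)/2) (by nlinarith) (by nlinarith)
      calc t - s = 2/Real.pi * (Real.pi*(t-s)/2) := by field_simp
        _ ≤ _ := h
    have hsin2 : 2/3*t ≤ Real.sin (Real.pi*(t+s)/2) := by
      rcases le_or_gt (t+s) 1 with hc | hc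
      · have h := Real.mul_le_sin (x := Real.pi*(t+s)/2) (by positivity) (by nlinarith)
        have e : 2/Real.pi * (Real.pi*(t+s)/2) = t+s := by field_simp
        rw [e] at h
        linarith
      · have h := Real.mul_le_sin (x := Real.pi*(2-(t+s))/2) (by nlinarith) (by nlinarith)
        have e : Real.sin (Real.pi*(t+s)/2) = Real.sin (Real.pi*(2-(t+s))/2) := by
          rw [show Real.pi*(2-(t+s))/2 = Real.pi - Real.pi*(t+s)/2 by ring, Real.sin_pi_sub]
        have e2 : 2/Real.pi * (Real.pi*(2-(t+s))/2) = 2-(t+s) := by field_simp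
        rw [e2] at h
        rw [e]
        linarith
    have hD2 : 8/9*(s*t^2) ≤ D := by
      rw [hD]
      have p1 : (0:ℝ) < 2*s := by linarith
      have p2 : (0:ℝ) < 2/3*t := by linarith
      have h12 : (2*s)*(2/3*t) ≤ Real.sin (Real.pi*s) * Real.sin (Real.pi*(t+s)/2) :=
        mul_le_mul hsin1 hsin2 p2.le (le_trans p1.le hsin1)
      have h3' : 2/3*t ≤ Real.sin (Real.pi*(t-s)/2) := by linarith
      have h123 : ((2*s)*(2/3*t))*(2/3*t) ≤
          Real.sin (Real.pi*s) * Real.sin (Real.pi*(t+s)/2) * Real.sin (Real.pi*(t-s)/2) :=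
        mul_le_mul h12 h3' p2.le (le_trans (by positivity) h12)
      nlinarith [h123]
    have hD0 : 0 < D := lt_of_lt_of_le (by positivity) hD2
    have hsum : ∑ k ∈ Finset.range (n+1), cesaroA (δ-1) (n-k) * DstarK k (t, s)
        = (∑ k ∈ Finset.range (n+1), cesaroA (δ-1) (n-k) * (Sfun t s (k+1) - Sfun t s k)) / D := by
      rw [Finset.sum_div]
      exact Finset.sum_congr rfl fun k _ => by rw [hDk k, mul_div_assoc]
    rw [hsum, abs_div, abs_of_pos hD0]
    have hrefl : ∑ k ∈ Finset.range (n+1), cesaroA (δ-1) (n-k) * (Sfun t s (k+1) - Sfun t s k)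
        = ∑ m ∈ Finset.range (n+1), cesaroA (δ-1) m * (Sfun t s (n-m+1) - Sfun t s (n-m)) := by
      rw [← Finset.sum_range_reflect]
      apply Finset.sum_congr rfl
      intro k hk
      have hk' : k ≤ n := Nat.lt_succ_iff.mp (Finset.mem_range.mp hk)
      have e : n + 1 - 1 - k = n - k := by omega
      rw [e, Nat.sub_sub_self hk']
    have hdiff : ∀ m : ℕ, m ∈ Finset.range (n+1) →
        cesaroA (δ-1) m * |Sfun t s (n-m+1) - Sfun t s (n-m)|
          ≤ cesaroA (δ-1) m * (15*(s*(((n:ℝ)+1)*t))) := by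
      intro m _
      apply mul_le_mul_of_nonneg_left _ (hAm m)
      have hd := Sfun_diff t s hs0 ht0.le (n-m)
      have hjn : ((n-m : ℕ) : ℝ) ≤ (n:ℝ) := by exact_mod_cast Nat.sub_le n m
      refine hd.trans ?_
      have hst' : (0:ℝ) ≤ s * (((n:ℝ)+1)*t) := by positivity
      have c1 : Real.pi*s ≤ 3.15*(s*(((n:ℝ)+1)*t)) := by
        have g1 : Real.pi * s ≤ 3.15 * s := mul_le_mul_of_nonneg_right hπ2 hs0
        have g2 : s * 1 ≤ s * (((n:ℝ)+1)*t) := mul_le_mul_of_nonneg_left hnt hs0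
        linarith
      have d1 : Real.pi*s + Real.pi*t ≤ 4.2*t := by
        have g3 : Real.pi*s ≤ Real.pi*(t/3) := mul_le_mul_of_nonneg_left hst hπ.le
        have g4 : Real.pi*t ≤ 3.15*t := mul_le_mul_of_nonneg_right hπ2 ht0.le
        linarith
      have d2 : Real.pi*s ≤ 3.15*s := mul_le_mul_of_nonneg_right hπ2 hs0
      have d3 : ((n-m:ℕ):ℝ) ≤ (n:ℝ)+1 := by linarith
      have e1 : (0:ℝ) ≤ Real.pi*s := by positivity
      have e2 : (0:ℝ) ≤ Real.pi*s + Real.pi*t := by positivity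
      have f1 : ((n-m:ℕ):ℝ)*(Real.pi*s) ≤ (((n:ℝ)+1))*(3.15*s) :=
        mul_le_mul d3 d2 e1 (by positivity)
      have f2 : ((n-m:ℕ):ℝ)*(Real.pi*s)*(Real.pi*s+Real.pi*t) ≤ ((((n:ℝ)+1))*(3.15*s))*(4.2*t) :=
        mul_le_mul f1 d1 e2 (by positivity)
      have f3 : ((((n:ℝ)+1))*(3.15*s))*(4.2*t) = 13.23*(s*(((n:ℝ)+1)*t)) := by ring
      linarith [f2, f3, c1, hst']
    have hFb : |∑ m ∈ Finset.range (n+1), cesaroA (δ-1) m * (Sfun t s (n-m+1) - Sfun t s (n-m))|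
        ≤ cesaroA δ n * (15*(s*(((n:ℝ)+1)*t))) := by
      refine (Finset.abs_sum_le_sum_abs _ _).trans ?_
      calc ∑ m ∈ Finset.range (n+1), |cesaroA (δ-1) m * (Sfun t s (n-m+1) - Sfun t s (n-m))|
          = ∑ m ∈ Finset.range (n+1), cesaroA (δ-1) m * |Sfun t s (n-m+1) - Sfun t s (n-m)| := by
            refine Finset.sum_congr rfl fun m _ => ?_
            rw [abs_mul, abs_of_nonneg (hAm m)]
        _ ≤ ∑ m ∈ Finset.range (n+1), cesaroA (δ-1) m * (15*(s*(((n:ℝ)+1)*t))) :=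
            Finset.sum_le_sum hdiff
        _ = (∑ m ∈ Finset.range (n+1), cesaroA (δ-1) m) * (15*(s*(((n:ℝ)+1)*t))) := by
            rw [← Finset.sum_mul]
        _ = cesaroA δ n * (15*(s*(((n:ℝ)+1)*t))) := by rw [cesaroA_sum]
    rw [hrefl]
    have step : |∑ m ∈ Finset.range (n+1), cesaroA (δ-1) m * (Sfun t s (n-m+1) - Sfun t s (n-m))| / D
        ≤ (cesaroA δ n * (15*(s*(((n:ℝ)+1)*t)))) / (8/9*(s*t^2)) :=
      div_le_div₀ (by positivity) hFb (by positivity) hD2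
    refine step.trans ?_
    have heq : (cesaroA δ n * (15*(s*(((n:ℝ)+1)*t)))) / (8/9*(s*t^2))
        = (135/8) * cesaroA δ n * ((n:ℝ)+1) / t := by
      field_simp
      ring
    rw [heq]
    rw [div_le_div_iff₀ ht0 ht0]
    nlinarith [hA0, hnpos, ht0]

set_option maxHeartbeats 1000000 in
theorem stmt_13 :
    ∀ δ : ℝ, 0 < δ → δ < 1 → ∃ C : ℝ, 0 < C ∧
      ∀ n : ℕ, 1 ≤ n →
        (1 / cesaroA δ n) *
            ∫ u in GammaT ∩
                {u : ℝ × ℝ | 1 / ((n : ℝ) + 1) ≤ u.1 ∧ u.2 ≤ 1 / (3 * ((n : ℝ) + 1))},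
              |∑ k ∈ Finset.range (n + 1), cesaroA (δ - 1) (n - k) * DstarK k u| ≤
          C * Real.log (n + 1) := by
  intro δ hδ0 hδ1
  refine ⟨6, by norm_num, ?_⟩
  intro n hn
  have hA1 : 1 ≤ cesaroA δ n := cesaroA_one_le hδ0.le n
  have hA0 : (0:ℝ) < cesaroA δ n := lt_of_lt_of_le one_pos hA1
  have hnpos : (0:ℝ) < (n:ℝ)+1 := by positivity
  set a : ℝ := 1/((n:ℝ)+1) with hadef
  set w : ℝ := 1/(3*((n:ℝ)+1)) with hwdef
  have ha0 : 0 < a := by rw [hadef]; positivity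
  have ha1 : a ≤ 1 := by
    rw [hadef, div_le_one hnpos]; linarith
  have hw0 : (0:ℝ) ≤ w := by rw [hwdef]; positivity
  set Aset := GammaT ∩ {u : ℝ × ℝ | 1 / ((n : ℝ) + 1) ≤ u.1 ∧ u.2 ≤ 1 / (3 * ((n : ℝ) + 1))}
    with hAsetdef
  set rect := Set.Icc a (1:ℝ) ×ˢ Set.Icc (0:ℝ) w with hrectdef
  have hsub : Aset ⊆ rect := by
    intro u hu
    obtain ⟨hG, hR⟩ := hu
    simp only [GammaT, Set.mem_setOf_eq] at hG
    simp only [Set.mem_setOf_eq] at hR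
    exact ⟨⟨hR.1, hG.2.2.2⟩, hG.1, hR.2⟩
  have mG : MeasurableSet GammaT := by
    have e : GammaT = {u : ℝ×ℝ | 0 ≤ u.2} ∩ ({u | u.2 ≤ u.1/3} ∩
        ({u | 0 ≤ u.1} ∩ {u | u.1 ≤ 1})) := by
      ext u; simp only [GammaT, Set.mem_setOf_eq, Set.mem_inter_iff]
    rw [e]
    exact (measurableSet_le measurable_const measurable_snd).inter
      ((measurableSet_le measurable_snd (measurable_fst.div_const 3)).inter
        ((measurableSet_le measurable_const measurable_fst).inter
          (measurableSet_le measurable_fst measurable_const)))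
  have mR : MeasurableSet {u : ℝ × ℝ | 1 / ((n : ℝ) + 1) ≤ u.1 ∧ u.2 ≤ 1 / (3 * ((n : ℝ) + 1))} := by
    rw [Set.setOf_and]
    exact (measurableSet_le measurable_const measurable_fst).inter
      (measurableSet_le measurable_snd measurable_const)
  have measA : MeasurableSet Aset := mG.inter mR
  set c : ℝ := 17 * cesaroA δ n * ((n:ℝ)+1) with hcdef
  have hc0 : (0:ℝ) ≤ c := by
    rw [hcdef]
    exact mul_nonneg (mul_nonneg (by norm_num) hA0.le) hnpos.le
  have hgc : ContinuousOn (fun u : ℝ×ℝ => c / u.1) rect := by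
    apply ContinuousOn.div continuousOn_const continuous_fst.continuousOn
    intro u hu
    exact ne_of_gt (lt_of_lt_of_le ha0 hu.1.1)
  have hg_rect : IntegrableOn (fun u : ℝ×ℝ => c / u.1) rect :=
    hgc.integrableOn_compact (isCompact_Icc.prod isCompact_Icc)
  have hgA : IntegrableOn (fun u : ℝ×ℝ => c / u.1) Aset := hg_rect.mono_set hsub
  have hpt : ∀ u ∈ Aset,
      |∑ k ∈ Finset.range (n + 1), cesaroA (δ - 1) (n - k) * DstarK k u| ≤ c / u.1 := by
    intro u hu
    obtain ⟨hG, hR⟩ := hu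
    simp only [GammaT, Set.mem_setOf_eq] at hG
    simp only [Set.mem_setOf_eq] at hR
    have hkey := key_bound δ hδ0 n u.1 u.2 hG.1 hG.2.1 hG.2.2.2 hR.1
    rw [Prod.mk.eta] at hkey
    exact hkey
  have hmeas : Measurable (fun u : ℝ×ℝ =>
      |∑ k ∈ Finset.range (n + 1), cesaroA (δ - 1) (n - k) * DstarK k u|) := by
    apply Measurable.abs
    apply Finset.measurable_sum
    intro k _
    apply Measurable.const_mul
    unfold DstarK
    fun_prop
  have hhA : IntegrableOn (fun u : ℝ×ℝ =>
      |∑ k ∈ Finset.range (n + 1), cesaroA (δ - 1) (n - k) * DstarK k u|) Aset := by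
    apply Integrable.mono hgA hmeas.aestronglyMeasurable
    refine (ae_restrict_iff' measA).2 (Filter.Eventually.of_forall fun u hu => ?_)
    have h1 := hpt u hu
    have hg0 : (0:ℝ) ≤ c / u.1 := div_nonneg hc0 (le_trans ha0.le (hsub hu).1.1)
    rw [Real.norm_eq_abs, Real.norm_eq_abs, abs_abs, abs_of_nonneg hg0]
    exact h1
  have step1 : (∫ u in Aset, |∑ k ∈ Finset.range (n + 1), cesaroA (δ - 1) (n - k) * DstarK k u|)
      ≤ ∫ u in Aset, c / u.1 := setIntegral_mono_on hhA hgA measA hpt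
  have hg0rect : 0 ≤ᵐ[volume.restrict rect] (fun u : ℝ×ℝ => c / u.1) :=
    (ae_restrict_iff' (measurableSet_Icc.prod measurableSet_Icc)).2
      (Filter.Eventually.of_forall fun u hu => div_nonneg hc0 (le_trans ha0.le hu.1.1))
  have step2 : (∫ u in Aset, c / u.1) ≤ ∫ u in rect, c / u.1 :=
    setIntegral_mono_set hg_rect hg0rect (HasSubset.Subset.eventuallyLE hsub)
  have hrectval : (∫ u in rect, c / u.1) = c * Real.log ((n:ℝ)+1) * w := by
    have e0 : (∫ u in rect, c / u.1)
        = ∫ u in rect, (fun x : ℝ => c/x) u.1 * (fun _ : ℝ => (1:ℝ)) u.2 := by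
      simp
    rw [e0, hrectdef, MeasureTheory.Measure.volume_eq_prod ℝ ℝ]
    have hfub := MeasureTheory.setIntegral_prod_mul (μ := (volume : Measure ℝ))
      (ν := (volume : Measure ℝ)) (L := ℝ) (fun x : ℝ => c/x) (fun _ : ℝ => (1:ℝ))
      (Set.Icc a 1) (Set.Icc (0:ℝ) w)
    rw [hfub]
    have i2 : (∫ _ in Set.Icc (0:ℝ) w, (1:ℝ)) = w := by
      rw [MeasureTheory.setIntegral_const]
      simp [Real.volume_Icc, ENNReal.toReal_ofReal hw0, hw0]
    have i1 : (∫ x in Set.Icc a (1:ℝ), c/x) = c * Real.log ((n:ℝ)+1) := by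
      rw [MeasureTheory.integral_Icc_eq_integral_Ioc, ← intervalIntegral.integral_of_le ha1]
      simp only [div_eq_mul_inv]
      rw [intervalIntegral.integral_const_mul, integral_inv_of_pos ha0 one_pos]
      congr 1
      rw [hadef, one_div_one_div]
    rw [i1, i2]
  have hlog : 0 ≤ Real.log ((n:ℝ)+1) := by
    apply Real.log_nonneg
    have : (1:ℝ) ≤ (n:ℝ) := by exact_mod_cast hn
    linarith
  have htotal : (∫ u in Aset, |∑ k ∈ Finset.range (n + 1), cesaroA (δ - 1) (n - k) * DstarK k u|)
      ≤ c * Real.log ((n:ℝ)+1) * w := by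
    rw [← hrectval]; exact le_trans step1 step2
  calc (1 / cesaroA δ n) *
        ∫ u in Aset, |∑ k ∈ Finset.range (n + 1), cesaroA (δ - 1) (n - k) * DstarK k u|
      ≤ (1 / cesaroA δ n) * (c * Real.log ((n:ℝ)+1) * w) := by
        apply mul_le_mul_of_nonneg_left htotal (by positivity)
    _ = (17/3) * Real.log ((n:ℝ)+1) := by
        rw [hcdef, hwdef]
        field_simp
    _ ≤ 6 * Real.log ((n:ℝ)+1) := by linarith
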